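/- arXiv:2402.08637 — 3 statements merged into one kernel-verified Lean document; each statement's English description precedes it below -/
import Mathlib

section
/- Coupling lemma for conditional marginals: let C and N be finite sets, p : C → [0,1] a probability vector, and β, β̂ two probability distributions on the set of functions [N]^C with conditional marginals β(j,c) = Σ_{f : f(c)=j} β(f) and β̂(j,c) defined analogously. Then there exists a probability distribution ρ on [N]^C with the same conditional marginals as β (i.e., ρ(j,c) = β(j,c) for all j, c) such that Σ_f |ρ(f) − β̂(f)| ≤ 2·Σ_{j∈N} Σ_{c∈C} |β(j,c) − β̂(j,c)|. -/
open Finset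

section CouplingAux

variable {C N : Type*} [Fintype C] [DecidableEq C] [Fintype N] [DecidableEq N]

/-- conditional marginal -/
noncomputable def cmarg (μ : (C → N) → ℝ) (c : C) (j : N) : ℝ :=
  ∑ f ∈ univ.filter (fun f : C → N => f c = j), μ f

lemma cmarg_nonneg (μ : (C → N) → ℝ) (hμ : ∀ f, 0 ≤ μ f) (c : C) (j : N) :
    0 ≤ cmarg μ c j := Finset.sum_nonneg fun f _ => hμ f

lemma sum_cmarg (μ : (C → N) → ℝ) (c : C) : ∑ j, cmarg μ c j = ∑ f, μ f :=
  Finset.sum_fiberwise _ _ _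

lemma sum_update_fiber (μ : (C → N) → ℝ) (c : C) (j j' : N)
    (Q : (C → N) → Prop) [DecidablePred Q]
    (hQ : ∀ f i, Q (Function.update f c i) ↔ Q f) :
    ∑ f ∈ univ.filter (fun f : C → N => Q f ∧ f c = j), μ (Function.update f c j')
      = ∑ g ∈ univ.filter (fun g : C → N => Q g ∧ g c = j'), μ g := by
  refine Finset.sum_nbij' (fun f => Function.update f c j')
    (fun g => Function.update g c j) ?_ ?_ ?_ ?_ ?_
  · intro f hf
    simp only [mem_filter, mem_univ, true_and] at hf ⊢
    exact ⟨(hQ f j').mpr hf.1, Function.update_self c j' f⟩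
  · intro g hg
    simp only [mem_filter, mem_univ, true_and] at hg ⊢
    exact ⟨(hQ g j).mpr hg.1, Function.update_self c j g⟩
  · intro f hf
    simp only [mem_filter, mem_univ, true_and] at hf
    funext x
    rcases eq_or_ne x c with rfl | hx
    · simp [hf.2]
    · simp [Function.update_of_ne hx]
  · intro g hg
    simp only [mem_filter, mem_univ, true_and] at hg
    funext x
    rcases eq_or_ne x c with rfl | hx
    · simp [hg.2]
    · simp [Function.update_of_ne hx]
  · intro f _; rfl

lemma sum_update_fiber' (μ : (C → N) → ℝ) (c : C) (j j' : N) :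
    ∑ f ∈ univ.filter (fun f : C → N => f c = j), μ (Function.update f c j')
      = cmarg μ c j' := by
  have h := sum_update_fiber μ c j j' (fun _ => True) (by simp)
  simpa [cmarg, true_and] using h

lemma adjust (μ : (C → N) → ℝ) (hμ0 : ∀ f, 0 ≤ μ f) (hμ1 : ∑ f, μ f = 1)
    (c : C) (ν : N → ℝ) (hν0 : ∀ j, 0 ≤ ν j) (hν1 : ∑ j, ν j = 1) :
    ∃ μ' : (C → N) → ℝ, (∀ f, 0 ≤ μ' f) ∧ (∑ f, μ' f = 1) ∧
      (∀ j, cmarg μ' c j = ν j) ∧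
      (∀ c', c' ≠ c → ∀ k, cmarg μ' c' k = cmarg μ c' k) ∧
      (∑ f, |μ' f - μ f|) ≤ ∑ j, |cmarg μ c j - ν j| := by
  classical
  set s : N → ℝ := fun j => max (cmarg μ c j - ν j) 0 with hs_def
  set t : N → ℝ := fun j => max (ν j - cmarg μ c j) 0 with ht_def
  have hs0 : ∀ j, 0 ≤ s j := fun j => le_max_right _ _
  have ht0 : ∀ j, 0 ≤ t j := fun j => le_max_right _ _
  have hM0 : ∀ j, 0 ≤ cmarg μ c j := cmarg_nonneg μ hμ0 c
  have hst : ∀ j, s j - t j = cmarg μ c j - ν j := by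
    intro j
    have h := max_zero_sub_max_neg_zero_eq_self (cmarg μ c j - ν j)
    simpa [hs_def, ht_def, neg_sub] using h
  have habs : ∀ j, s j + t j = |cmarg μ c j - ν j| := by
    intro j
    rcases le_total (ν j) (cmarg μ c j) with h | h
    · rw [abs_of_nonneg (by linarith)]
      simp only [hs_def, ht_def]
      rw [max_eq_left (by linarith), max_eq_right (by linarith)]
      ring
    · rw [abs_of_nonpos (by linarith)]
      simp only [hs_def, ht_def]
      rw [max_eq_right (by linarith), max_eq_left (by linarith)]
      ring
  have hsum_st : ∑ j, s j = ∑ j, t j := by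
    have h1 : ∑ j, (s j - t j) = 0 := by
      calc ∑ j, (s j - t j) = ∑ j, (cmarg μ c j - ν j) :=
            Finset.sum_congr rfl fun j _ => hst j
        _ = (∑ j, cmarg μ c j) - ∑ j, ν j := Finset.sum_sub_distrib _ _
        _ = 0 := by rw [sum_cmarg μ c, hμ1, hν1]; ring
    have h2 : ∑ j, (s j - t j) = (∑ j, s j) - ∑ j, t j := Finset.sum_sub_distrib _ _
    linarith
  set m : ℝ := ∑ j, s j with hm_def
  have hm0 : 0 ≤ m := Finset.sum_nonneg fun j _ => hs0 j
  by_cases hm : m = 0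
  · -- all marginal differences vanish; take μ' = μ
    have hsz : ∀ j, s j = 0 := by
      intro j
      have := (Finset.sum_eq_zero_iff_of_nonneg (fun j _ => hs0 j)).mp hm j (mem_univ j)
      exact this
    have htz : ∀ j, t j = 0 := by
      intro j
      have hsum : ∑ j, t j = 0 := by rw [← hsum_st]; exact hm
      exact (Finset.sum_eq_zero_iff_of_nonneg (fun j _ => ht0 j)).mp hsum j (mem_univ j)
    have hmeq : ∀ j, cmarg μ c j = ν j := by
      intro j
      have : |cmarg μ c j - ν j| = 0 := by rw [← habs j, hsz j, htz j]; ring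
      have := abs_eq_zero.mp this
      linarith
    refine ⟨μ, hμ0, hμ1, hmeq, fun c' _ k => rfl, ?_⟩
    have : (∑ f, |μ f - μ f|) = 0 := by simp
    rw [this]
    exact Finset.sum_nonneg fun j _ => abs_nonneg _
  · have hmpos : 0 < m := lt_of_le_of_ne hm0 (Ne.symm hm)
    set q : N → ℝ := fun j => if cmarg μ c j = 0 then 0 else s j / cmarg μ c j with hq_def
    set r : N → ℝ := fun j => t j / m with hr_def
    have hq0 : ∀ j, 0 ≤ q j := by
      intro j
      simp only [hq_def]
      split
      · exact le_refl 0
      · exact div_nonneg (hs0 j) (hM0 j)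
    have hsle : ∀ j, s j ≤ cmarg μ c j := by
      intro j
      simp only [hs_def]
      exact max_le (by linarith [hν0 j]) (hM0 j)
    have hq1 : ∀ j, q j ≤ 1 := by
      intro j
      simp only [hq_def]
      split
      · norm_num
      · rename_i h
        have hMpos : 0 < cmarg μ c j := lt_of_le_of_ne (hM0 j) (Ne.symm h)
        rw [div_le_one hMpos]
        exact hsle j
    have hqM : ∀ j, q j * cmarg μ c j = s j := by
      intro j
      simp only [hq_def]
      split
      · rename_i h
        have hsz : s j = 0 := by
          simp only [hs_def]
          rw [h]
          exact max_eq_right (by linarith [hν0 j])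
        rw [h, hsz]; ring
      · rename_i h
        field_simp
    have hrm : ∀ j, r j * m = t j := by
      intro j
      simp only [hr_def]
      field_simp
    have hr0 : ∀ j, 0 ≤ r j := fun j => div_nonneg (ht0 j) hm0
    have hrsum : ∑ j, r j = 1 := by
      simp only [hr_def]
      rw [← Finset.sum_div, ← hsum_st]
      exact div_self hm
    set inc : (C → N) → ℝ := fun f => ∑ j', μ (Function.update f c j') * q j' with hinc_def
    set μ' : (C → N) → ℝ := fun f => μ f * (1 - q (f c)) + inc f * r (f c) with hμ'_def
    have hinc0 : ∀ f, 0 ≤ inc f :=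
      fun f => Finset.sum_nonneg fun j' _ => mul_nonneg (hμ0 _) (hq0 _)
    have hμ'0 : ∀ f, 0 ≤ μ' f := by
      intro f
      exact add_nonneg (mul_nonneg (hμ0 f) (by linarith [hq1 (f c)]))
        (mul_nonneg (hinc0 f) (hr0 _))
    -- sum of inc over a fiber of c is m
    have hfiber_inc : ∀ j, ∑ f ∈ univ.filter (fun f : C → N => f c = j), inc f = m := by
      intro j
      simp only [hinc_def]
      rw [Finset.sum_comm]
      calc ∑ j' : N, ∑ f ∈ univ.filter (fun f : C → N => f c = j),
              μ (Function.update f c j') * q j'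
          = ∑ j' : N, cmarg μ c j' * q j' := by
            refine Finset.sum_congr rfl fun j' _ => ?_
            rw [← Finset.sum_mul, sum_update_fiber' μ c j j']
        _ = ∑ j' : N, s j' := by
            refine Finset.sum_congr rfl fun j' _ => ?_
            rw [mul_comm]; exact hqM j'
        _ = m := rfl
    have hmarg_c : ∀ j, cmarg μ' c j = ν j := by
      intro j
      simp only [cmarg, hμ'_def]
      rw [Finset.sum_add_distrib]
      have h1 : ∑ f ∈ univ.filter (fun f : C → N => f c = j), μ f * (1 - q (f c))
          = cmarg μ c j * (1 - q j) := by
        rw [cmarg, Finset.sum_mul]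
        refine Finset.sum_congr rfl fun f hf => ?_
        rw [(mem_filter.mp hf).2]
      have h2 : ∑ f ∈ univ.filter (fun f : C → N => f c = j), inc f * r (f c)
          = m * r j := by
        rw [← hfiber_inc j, Finset.sum_mul]
        refine Finset.sum_congr rfl fun f hf => ?_
        rw [(mem_filter.mp hf).2]
      rw [h1, h2]
      have h3 := hqM j
      have h4 := hrm j
      have h5 := hst j
      nlinarith [h3, h4, h5]
    have hmarg_other : ∀ c', c' ≠ c → ∀ k, cmarg μ' c' k = cmarg μ c' k := by
      intro c' hc' k
      simp only [cmarg, hμ'_def]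
      rw [Finset.sum_add_distrib]
      have hQ : ∀ (f : C → N) (i : N),
          (Function.update f c i) c' = k ↔ f c' = k := by
        intro f i
        rw [Function.update_of_ne hc']
      -- abbreviations
      set S : Finset (C → N) := univ.filter (fun f : C → N => f c' = k) with hS_def
      set B : N → ℝ := fun i => ∑ f ∈ univ.filter (fun f : C → N => f c' = k ∧ f c = i), μ f
        with hB_def
      have hfilter : ∀ i : N, S.filter (fun f : C → N => f c = i)
          = univ.filter (fun f : C → N => f c' = k ∧ f c = i) := by
        intro i
        simp only [hS_def, Finset.filter_filter]
      have hout : ∑ f ∈ S, μ f * q (f c) = ∑ i : N, q i * B i := by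
        rw [← Finset.sum_fiberwise S (fun f => f c) (fun f => μ f * q (f c))]
        refine Finset.sum_congr rfl fun i _ => ?_
        rw [hfilter i, hB_def]
        simp only
        rw [Finset.mul_sum]
        refine Finset.sum_congr rfl fun f hf => ?_
        have : f c = i := (mem_filter.mp hf).2.2
        rw [this, mul_comm]
      have hin : ∑ f ∈ S, inc f * r (f c) = ∑ i : N, q i * B i := by
        rw [← Finset.sum_fiberwise S (fun f => f c) (fun f => inc f * r (f c))]
        have hinner : ∀ i : N,
            ∑ f ∈ S.filter (fun f : C → N => f c = i), inc f * r (f c)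
              = r i * ∑ j' : N, q j' * B j' := by
          intro i
          rw [hfilter i]
          have step1 : ∑ f ∈ univ.filter (fun f : C → N => f c' = k ∧ f c = i),
              inc f * r (f c)
              = r i * ∑ f ∈ univ.filter (fun f : C → N => f c' = k ∧ f c = i), inc f := by
            rw [Finset.mul_sum]
            refine Finset.sum_congr rfl fun f hf => ?_
            have : f c = i := (mem_filter.mp hf).2.2
            rw [this, mul_comm]
          rw [step1]
          congr 1
          simp only [hinc_def]
          rw [Finset.sum_comm]
          refine Finset.sum_congr rfl fun j' _ => ?_
          rw [← Finset.sum_mul,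
            sum_update_fiber μ c i j' (fun f => f c' = k) (fun f i' => hQ f i'),
            mul_comm, hB_def]
        calc ∑ i : N, ∑ f ∈ S.filter (fun f : C → N => f c = i), inc f * r (f c)
            = ∑ i : N, r i * ∑ j' : N, q j' * B j' :=
              Finset.sum_congr rfl fun i _ => hinner i
          _ = (∑ i : N, r i) * ∑ j' : N, q j' * B j' := by rw [Finset.sum_mul]
          _ = ∑ i : N, q i * B i := by rw [hrsum, one_mul]
      have expand : ∑ f ∈ S, μ f * (1 - q (f c))
          = (∑ f ∈ S, μ f) - ∑ f ∈ S, μ f * q (f c) := by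
        rw [← Finset.sum_sub_distrib]
        refine Finset.sum_congr rfl fun f _ => by ring
      rw [expand, hout, hin]
      ring
    have hsum1 : ∑ f, μ' f = 1 := by
      rw [← sum_cmarg μ' c]
      rw [Finset.sum_congr rfl fun j _ => hmarg_c j]
      exact hν1
    refine ⟨μ', hμ'0, hsum1, hmarg_c, hmarg_other, ?_⟩
    have key : ∀ f, |μ' f - μ f| ≤ μ f * q (f c) + inc f * r (f c) := by
      intro f
      have heq : μ' f - μ f = inc f * r (f c) - μ f * q (f c) := by
        simp only [hμ'_def]; ring
      rw [heq, abs_le]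
      constructor <;>
        nlinarith [mul_nonneg (hμ0 f) (hq0 (f c)), mul_nonneg (hinc0 f) (hr0 (f c))]
    calc ∑ f, |μ' f - μ f| ≤ ∑ f, (μ f * q (f c) + inc f * r (f c)) :=
          Finset.sum_le_sum fun f _ => key f
      _ = (∑ f, μ f * q (f c)) + ∑ f, inc f * r (f c) := Finset.sum_add_distrib
      _ = (∑ j, s j) + ∑ j, t j := by
          congr 1
          · rw [← Finset.sum_fiberwise univ (fun f : C → N => f c)
              (fun f => μ f * q (f c))]
            refine Finset.sum_congr rfl fun j _ => ?_
            rw [← hqM j, cmarg, Finset.mul_sum]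
            refine Finset.sum_congr rfl fun f hf => ?_
            rw [(mem_filter.mp hf).2, mul_comm]
          · rw [← Finset.sum_fiberwise univ (fun f : C → N => f c)
              (fun f => inc f * r (f c))]
            refine Finset.sum_congr rfl fun j _ => ?_
            rw [← hrm j, ← hfiber_inc j, Finset.mul_sum]
            refine Finset.sum_congr rfl fun f hf => ?_
            rw [(mem_filter.mp hf).2, mul_comm]
      _ = ∑ j, (s j + t j) := Finset.sum_add_distrib.symm
      _ = ∑ j, |cmarg μ c j - ν j| := Finset.sum_congr rfl fun j _ => habs j

end CouplingAux

/-- Coupling lemma for conditional marginals: given two distributions `β`, `βh`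
on pure strategies `C → N`, there is a distribution `ρ` with the same
conditional marginals as `β` whose total-variation-type distance to `βh` is at
most twice the ℓ1 distance between the marginals of `β` and `βh`. -/
theorem coupling_for_conditional_marginals
    {C N : Type*} [Fintype C] [DecidableEq C] [Fintype N] [DecidableEq N]
    [Nonempty C] [Nonempty N]
    (β : (C → N) → ℝ) (hβ0 : ∀ f, 0 ≤ β f) (hβ1 : ∑ f, β f = 1)
    (βh : (C → N) → ℝ) (hβh0 : ∀ f, 0 ≤ βh f) (hβh1 : ∑ f, βh f = 1) :
    ∃ ρ : (C → N) → ℝ,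
      (∀ f, 0 ≤ ρ f) ∧ (∑ f, ρ f = 1) ∧
      (∀ (j : N) (c : C),
        ∑ f ∈ Finset.univ.filter (fun f : C → N => f c = j), ρ f
          = ∑ f ∈ Finset.univ.filter (fun f : C → N => f c = j), β f) ∧
      (∑ f, |ρ f - βh f|)
        ≤ 2 * ∑ j : N, ∑ c : C,
            |(∑ f ∈ Finset.univ.filter (fun f : C → N => f c = j), β f)
              - ∑ f ∈ Finset.univ.filter (fun f : C → N => f c = j), βh f| := by
  classical
  have main : ∀ S : Finset C, ∃ ρ : (C → N) → ℝ,
      (∀ f, 0 ≤ ρ f) ∧ (∑ f, ρ f = 1) ∧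
      (∀ c ∈ S, ∀ j, cmarg ρ c j = cmarg β c j) ∧
      (∀ c ∉ S, ∀ j, cmarg ρ c j = cmarg βh c j) ∧
      (∑ f, |ρ f - βh f|) ≤ ∑ c ∈ S, ∑ j, |cmarg β c j - cmarg βh c j| := by
    intro S
    induction S using Finset.induction with
    | empty =>
        refine ⟨βh, hβh0, hβh1, by simp, fun c _ j => rfl, ?_⟩
        simp
    | @insert a S ha ih =>
        obtain ⟨ρ, hρ0, hρ1, hin, hout, hl1⟩ := ih
        obtain ⟨ρ', hρ'0, hρ'1, hmc, hmo, hl1'⟩ :=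
          adjust ρ hρ0 hρ1 a (fun j => cmarg β a j)
            (fun j => cmarg_nonneg β hβ0 a j)
            (by rw [sum_cmarg β a, hβ1])
        refine ⟨ρ', hρ'0, hρ'1, ?_, ?_, ?_⟩
        · intro c hc j
          rcases Finset.mem_insert.mp hc with rfl | hcS
          · exact hmc j
          · have hca : c ≠ a := by rintro rfl; exact ha hcS
            rw [hmo c hca j]
            exact hin c hcS j
        · intro c hc j
          have hca : c ≠ a := fun h => hc (h ▸ Finset.mem_insert_self a S)
          have hcS : c ∉ S := fun h => hc (Finset.mem_insert_of_mem h)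
          rw [hmo c hca j]
          exact hout c hcS j
        · have tri : ∑ f, |ρ' f - βh f| ≤ (∑ f, |ρ' f - ρ f|) + ∑ f, |ρ f - βh f| := by
            rw [← Finset.sum_add_distrib]
            refine Finset.sum_le_sum fun f _ => ?_
            calc |ρ' f - βh f| = |(ρ' f - ρ f) + (ρ f - βh f)| := by ring_nf
              _ ≤ |ρ' f - ρ f| + |ρ f - βh f| := abs_add_le _ _
          have hstep : (∑ f, |ρ' f - ρ f|) ≤ ∑ j, |cmarg β a j - cmarg βh a j| := by
            refine le_trans hl1' ?_
            refine le_of_eq (Finset.sum_congr rfl fun j _ => ?_)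
            rw [hout a ha j, abs_sub_comm]
          rw [Finset.sum_insert ha]
          linarith
  obtain ⟨ρ, hρ0, hρ1, hin, _, hl1⟩ := main Finset.univ
  refine ⟨ρ, hρ0, hρ1, fun j c => hin c (mem_univ c) j, ?_⟩
  have hswap : ∑ j : N, ∑ c : C,
      |(∑ f ∈ Finset.univ.filter (fun f : C → N => f c = j), β f)
        - ∑ f ∈ Finset.univ.filter (fun f : C → N => f c = j), βh f|
      = ∑ c : C, ∑ j : N, |cmarg β c j - cmarg βh c j| := by
    rw [Finset.sum_comm]
    rfl
  have hpos : 0 ≤ ∑ c : C, ∑ j : N, |cmarg β c j - cmarg βh c j| :=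
    Finset.sum_nonneg fun c _ => Finset.sum_nonneg fun j _ => abs_nonneg _
  rw [hswap]
  have := hl1
  linarith
end

section
/- Zero swap regret of Stackelberg-mixture play: let J be a finite set of pairs (α, f) where α is a probability distribution on a finite set A and f ∈ F is a best response to α, i.e., Σ_{a∈A} α(a)·u_L(a, f) ≥ Σ_{a∈A} α(a)·u_L(a, g) for all g ∈ F. Let D be any probability distribution on J, and for each a ∈ A and f ∈ F define w(a, f) := Σ_{(α,g)∈J, g=f} D(α,g)·α(a). Then for every swap map π : F → F, Σ_{a∈A} Σ_{f∈F} w(a,f)·u_L(a, f) ≥ Σ_{a∈A} Σ_{f∈F} w(a,f)·u_L(a, π(f)). -/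
/-- Zero swap regret of Stackelberg-mixture play: let `J` be a finite set of
pairs `(α, f)` where `f` is a best response to the commitment `α`, and let `D`
be a distribution over `J`.  The induced weighted play
`w(a,f) = Σ_{(α,g)∈J, g=f} D(α,g)·α(a)` has no swap regret: no swap map
`π : F → F` improves the total utility. -/
theorem stackelberg_mixture_no_swap_regret
    {A F : Type*} [Fintype A] [Fintype F] [DecidableEq F]
    (uL : A → F → ℝ)
    (J : Finset ((A → ℝ) × F))
    (hbr : ∀ p ∈ J, ∀ g : F, (∑ a, p.1 a * uL a g) ≤ ∑ a, p.1 a * uL a p.2)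
    (D : ((A → ℝ) × F) → ℝ) (hD0 : ∀ p ∈ J, 0 ≤ D p)
    (hD1 : ∑ p ∈ J, D p = 1) :
    ∀ π : F → F,
      (∑ a, ∑ f, (∑ p ∈ J.filter (fun p => p.2 = f), D p * p.1 a) * uL a (π f))
        ≤ ∑ a, ∑ f, (∑ p ∈ J.filter (fun p => p.2 = f), D p * p.1 a) * uL a f := by
  intro π
  have key : ∀ φ : F → F,
      (∑ a, ∑ f, (∑ p ∈ J.filter (fun p => p.2 = f), D p * p.1 a) * uL a (φ f))
        = ∑ p ∈ J, D p * ∑ a, p.1 a * uL a (φ p.2) := by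
    intro φ
    rw [Finset.sum_comm]
    have : ∀ f : F,
        (∑ a, (∑ p ∈ J.filter (fun p => p.2 = f), D p * p.1 a) * uL a (φ f))
          = ∑ p ∈ J.filter (fun p => p.2 = f), D p * ∑ a, p.1 a * uL a (φ f) := by
      intro f
      simp_rw [Finset.sum_mul, Finset.mul_sum, mul_assoc]
      rw [Finset.sum_comm]
    simp_rw [this]
    rw [← Finset.sum_fiberwise J (fun p => p.2)
      (fun p => D p * ∑ a, p.1 a * uL a (φ p.2))]
    refine Finset.sum_congr rfl fun f _ => Finset.sum_congr rfl fun p hp => ?_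
    rw [(Finset.mem_filter.mp hp).2]
  have h2 := key id
  simp only [id] at h2
  rw [key π, h2]
  refine Finset.sum_le_sum fun p hp => ?_
  exact mul_le_mul_of_nonneg_left (hbr p hp (π p.2)) (hD0 p hp)
end

section
/- Approximate best response becomes exact after mixing: let I = {0, ε, …, (N−1)ε} with ε > 0, let v_L ∈ I, and let α be a mixed bid distribution for the optimizer such that the learner's utilities u_L(α, j) (for bids jε, j ∈ {0,…,N−1}) satisfy u_L(α, 0) ≥ u_L(α, j) − δ for all j, where δ ≥ 0. Suppose also that against the zero bid of the optimizer, the learner's utility of bidding jε is v_L − jε (winning at price jε). Let η = 2δ/ε and define α' = η·(point mass at bid 0) + (1−η)·α, assuming η ≤ 1. Then u_L(α', 0) ≥ u_L(α', j) + δ for all j ≥ 1; in particular bid 0 is a strict best response to α'. -/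
/-- Approximate best response becomes exact after mixing: if bid `0` is a
`δ`-approximate best response to `α` (utilities `uα j` for bidding `jε`), and
against the optimizer's zero bid the learner's utility of bidding `jε` is
`v_L − jε`, then mixing probability `η = 2δ/ε` of the zero bid into `α` makes
bid `0` better than every bid `jε`, `j ≥ 1`, by at least `δ`. -/
theorem approx_best_response_to_exact
    (N : ℕ) (ε δ v_L : ℝ) (hε : 0 < ε) (hδ : 0 ≤ δ)
    (uα : ℕ → ℝ)
    (happrox : ∀ j < N, uα 0 ≥ uα j - δ)
    (hη1 : 2 * δ / ε ≤ 1) :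
    ∀ j, 1 ≤ j → j < N →
      (2 * δ / ε) * (v_L - (0 : ℕ) * ε) + (1 - 2 * δ / ε) * uα 0
        ≥ ((2 * δ / ε) * (v_L - (j : ℝ) * ε) + (1 - 2 * δ / ε) * uα j) + δ := by
  intro j hj1 hjN
  have ha := happrox j hjN
  have hj : (1 : ℝ) ≤ (j : ℝ) := by exact_mod_cast hj1
  have hη0 : 0 ≤ 2 * δ / ε := by positivity
  have hd : 2 * δ / ε * ε = 2 * δ := by field_simp
  push_cast
  nlinarith [mul_le_mul_of_nonneg_left hj hη0, mul_le_mul_of_nonneg_right hη1 hε.le]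
end
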